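/- Let ρ be a density matrix on ℋ_A ⊗ ℋ_B (both finite-dimensional complex Hilbert spaces). If there exist a finite family of POVMs {E^j_a}_a on ℋ_A and m POVMs {F^i_b}_b (i = 1,...,m) on ℋ_B whose joint statistics on ρ admit no local hidden variable model (i.e. there do not exist a finite set Λ, a probability distribution p on Λ, and response functions P_A(a|j,λ), P_B(b|i,λ) as in Theorem 1 with Tr(ρ(E^j_a ⊗ F^i_b)) = Σ_λ p(λ) P_A(a|j,λ) P_B(b|i,λ) for all j,i,a,b), then ρ has no symmetric extension to m copies of B: there is no density matrix ρ' on ℋ_A ⊗ ℋ_B^{⊗m} whose reduced density matrix on ℋ_A ⊗ ℋ_{B_i} equals ρ for every i = 1,...,m. -/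

import Mathlib

set_option linter.unusedSectionVars false
set_option maxHeartbeats 1600000

open Matrix
open scoped Kronecker ComplexConjugate ComplexOrder

/-- A density matrix: positive semidefinite with trace 1. -/
def IsDensityMatrix {n : Type*} [Fintype n] [DecidableEq n] (ρ : Matrix n n ℂ) : Prop :=
  ρ.PosSemidef ∧ ρ.trace = 1

/-- A POVM: a finite family of positive semidefinite operators summing to the identity. -/
def IsPOVM {n O : Type*} [Fintype n] [DecidableEq n] [Fintype O]
    (E : O → Matrix n n ℂ) : Prop :=
  (∀ a, (E a).PosSemidef) ∧ ∑ a, E a = 1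

/-- The reduced density matrix of a state on `ℋ_A ⊗ ℋ_B^{⊗m}` on the factors `ℋ_A ⊗ ℋ_{B_i}`,
obtained by tracing out all the other `B` factors. -/
noncomputable def reducedAt {dA dB m : ℕ}
    (ρ' : Matrix (Fin dA × (Fin m → Fin dB)) (Fin dA × (Fin m → Fin dB)) ℂ)
    (i : Fin m) : Matrix (Fin dA × Fin dB) (Fin dA × Fin dB) ℂ :=
  Matrix.of fun p q => ∑ g : Fin m → Fin dB,
    if g i = p.2 then ρ' (p.1, g) (q.1, Function.update g i q.2) else 0

open scoped MatrixOrder in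
lemma posSemidef_iff_eq_ct_mul_self' {n : Type*} [Fintype n] [DecidableEq n]
    {A : Matrix n n ℂ} : A.PosSemidef ↔ ∃ B : Matrix n n ℂ, A = Bᴴ * B := by
  constructor
  · intro hA
    obtain ⟨B, rfl⟩ := CStarAlgebra.nonneg_iff_eq_star_mul_self.mp hA.nonneg
    exact ⟨B, rfl⟩
  · rintro ⟨B, rfl⟩
    exact Matrix.posSemidef_conjTranspose_mul_self B

section AuxHelpers
open Finset
variable {n p : Type*} [Fintype n] [Fintype p] [DecidableEq n] [DecidableEq p]

lemma trace_mul_apply' (X Y : Matrix n n ℂ) : (X * Y).trace = ∑ x, ∑ y, X x y * Y y x := by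
  simp [Matrix.trace, Matrix.mul_apply, Matrix.diag]

lemma psd_trace_nonneg {A : Matrix n n ℂ} (hA : A.PosSemidef) : 0 ≤ A.trace := by
  obtain ⟨B, rfl⟩ := posSemidef_iff_eq_ct_mul_self'.mp hA
  rw [trace_mul_apply']
  refine Finset.sum_nonneg fun x _ => Finset.sum_nonneg fun y _ => ?_
  simpa [Matrix.conjTranspose_apply] using star_mul_self_nonneg (B y x)

lemma psd_trace_mul_nonneg {A B : Matrix n n ℂ} (hA : A.PosSemidef) (hB : B.PosSemidef) :
    0 ≤ (A * B).trace := by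
  obtain ⟨C, rfl⟩ := posSemidef_iff_eq_ct_mul_self'.mp hB
  have h1 : (A * (Cᴴ * C)).trace = (C * A * Cᴴ).trace := by
    rw [Matrix.trace_mul_comm, Matrix.mul_assoc, Matrix.trace_mul_cycle, ← Matrix.mul_assoc]
  rw [h1]
  exact psd_trace_nonneg (hA.mul_mul_conjTranspose_same C)

lemma kron_conjT (A : Matrix n n ℂ) (B : Matrix p p ℂ) : (A ⊗ₖ B)ᴴ = Aᴴ ⊗ₖ Bᴴ := by
  ext ⟨i,j⟩ ⟨k,l⟩
  simp [Matrix.conjTranspose_apply, mul_comm]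

lemma psd_kron {A : Matrix n n ℂ} {B : Matrix p p ℂ} (hA : A.PosSemidef) (hB : B.PosSemidef) :
    (A ⊗ₖ B).PosSemidef := by
  obtain ⟨C, rfl⟩ := posSemidef_iff_eq_ct_mul_self'.mp hA
  obtain ⟨D, rfl⟩ := posSemidef_iff_eq_ct_mul_self'.mp hB
  rw [Matrix.mul_kronecker_mul, ← kron_conjT]
  exact Matrix.posSemidef_conjTranspose_mul_self _

lemma sum_kron {α : Type*} (s : Finset α) (f : α → Matrix n n ℂ) (B : Matrix p p ℂ) :
    (∑ a ∈ s, f a) ⊗ₖ B = ∑ a ∈ s, (f a ⊗ₖ B) := by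
  ext ⟨i,j⟩ ⟨k,l⟩
  simp [Matrix.sum_apply, Finset.sum_mul]

noncomputable def GM {dB m : ℕ} {OB : Type} (F : Fin m → OB → Matrix (Fin dB) (Fin dB) ℂ)
    (bv : Fin m → OB) : Matrix (Fin m → Fin dB) (Fin m → Fin dB) ℂ :=
  Matrix.of fun g h => ∏ i, F i (bv i) (g i) (h i)

lemma GM_posSemidef {dB m : ℕ} {OB : Type} {F : Fin m → OB → Matrix (Fin dB) (Fin dB) ℂ}
    (bv : Fin m → OB) (hF : ∀ i, (F i (bv i)).PosSemidef) : (GM F bv).PosSemidef := by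
  choose C hC using fun i => posSemidef_iff_eq_ct_mul_self'.mp (hF i)
  have : GM F bv = (Matrix.of fun k g : Fin m → Fin dB => ∏ i, C i (k i) (g i))ᴴ *
      (Matrix.of fun k g : Fin m → Fin dB => ∏ i, C i (k i) (g i)) := by
    ext g h
    simp only [GM, Matrix.mul_apply, Matrix.conjTranspose_apply, Matrix.of_apply]
    calc ∏ i, F i (bv i) (g i) (h i)
        = ∏ i, ∑ c, star (C i c (g i)) * C i c (h i) := by
          refine Finset.prod_congr rfl fun i _ => ?_
          rw [hC i]
          simp [Matrix.mul_apply, Matrix.conjTranspose_apply]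
      _ = ∑ k : Fin m → Fin dB, ∏ i, star (C i (k i) (g i)) * C i (k i) (h i) :=
          Fintype.prod_sum _
      _ = ∑ k : Fin m → Fin dB, star (∏ i, C i (k i) (g i)) * ∏ i, C i (k i) (h i) := by
          refine Finset.sum_congr rfl fun k _ => ?_
          rw [star_prod, ← Finset.prod_mul_distrib]
  rw [this]
  exact Matrix.posSemidef_conjTranspose_mul_self _

lemma sum_GM {dB m : ℕ} {OB : Type} [Fintype OB] {F : Fin m → OB → Matrix (Fin dB) (Fin dB) ℂ}
    (hF : ∀ i, ∑ b, F i b = 1) : ∑ bv : Fin m → OB, GM F bv = 1 := by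
  ext g h
  rw [Matrix.sum_apply]
  simp only [GM, Matrix.of_apply]
  rw [← Fintype.prod_sum (fun (i : Fin m) (b : OB) => F i b (g i) (h i))]
  calc ∏ i, (∑ b, F i b (g i) (h i))
      = ∏ i, (1 : Matrix (Fin dB) (Fin dB) ℂ) (g i) (h i) := by
        refine Finset.prod_congr rfl fun i _ => ?_
        rw [← hF i, Matrix.sum_apply]
    _ = ∏ i : Fin m, if g i = h i then (1:ℂ) else 0 := by
        simp [Matrix.one_apply]
    _ = if ∀ i ∈ (univ : Finset (Fin m)), g i = h i then (1:ℂ) else 0 := by rw [Finset.prod_boole]; congr 1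
    _ = (1 : Matrix (Fin m → Fin dB) (Fin m → Fin dB) ℂ) g h := by
        simp [Matrix.one_apply, funext_iff]

lemma sum_ind_prod {m dB : ℕ} {OB : Type} [Fintype OB] [DecidableEq OB]
    (F : Fin m → OB → Matrix (Fin dB) (Fin dB) ℂ) (hF : ∀ i', ∑ b, F i' b = 1)
    (i : Fin m) (b : OB) (g h : Fin m → Fin dB) :
    ∑ bv : Fin m → OB, (if bv i = b then ∏ i', F i' (bv i') (h i') (g i') else 0)
      = F i b (h i) (g i) * ∏ i' ∈ univ.erase i, (if h i' = g i' then (1:ℂ) else 0) := by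
  set φ : Fin m → OB → ℂ := fun i' c =>
    if i' = i then (if c = b then F i b (h i) (g i) else 0) else F i' c (h i') (g i') with hφ
  have step1 : ∀ bv : Fin m → OB,
      (if bv i = b then ∏ i', F i' (bv i') (h i') (g i') else 0) = ∏ i', φ i' (bv i') := by
    intro bv
    rw [← Finset.mul_prod_erase univ (fun i' => φ i' (bv i')) (mem_univ i)]
    have h2 : ∏ i' ∈ univ.erase i, φ i' (bv i')
        = ∏ i' ∈ univ.erase i, F i' (bv i') (h i') (g i') := by
      refine Finset.prod_congr rfl fun i' hi' => ?_
      simp [hφ, (Finset.mem_erase.mp hi').1]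
    rw [h2]
    simp only [hφ, if_pos rfl]
    by_cases hb : bv i = b
    · rw [if_pos hb, if_pos hb, ← Finset.mul_prod_erase univ
        (fun i' => F i' (bv i') (h i') (g i')) (mem_univ i), hb]
    · rw [if_neg hb, if_neg hb, zero_mul]
  simp only [step1]
  rw [← Fintype.prod_sum φ, ← Finset.mul_prod_erase univ (fun i' => ∑ c, φ i' c) (mem_univ i)]
  congr 1
  · simp [hφ]
  · refine Finset.prod_congr rfl fun i' hi' => ?_
    have hne := (Finset.mem_erase.mp hi').1
    simp only [hφ, if_neg hne]
    rw [← Matrix.sum_apply, hF i']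
    simp [Matrix.one_apply]

lemma sum_over_agree {m dB : ℕ} (i : Fin m) (g : Fin m → Fin dB) (f : (Fin m → Fin dB) → ℂ) :
    ∑ h : Fin m → Fin dB, (if ∀ i' ∈ univ.erase i, h i' = g i' then f h else 0)
      = ∑ v : Fin dB, f (Function.update g i v) := by
  have step : ∀ h : Fin m → Fin dB,
      (if ∀ i' ∈ univ.erase i, h i' = g i' then f h else 0)
        = ∑ v, if h = Function.update g i v then f h else 0 := by
    intro h
    by_cases hc : ∀ i' ∈ univ.erase i, h i' = g i'
    · rw [if_pos hc]
      have hh : h = Function.update g i (h i) := by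
        funext i'
        by_cases hi : i' = i
        · subst hi; simp
        · rw [Function.update_of_ne hi]
          exact hc i' (Finset.mem_erase.mpr ⟨hi, mem_univ _⟩)
      rw [Finset.sum_eq_single (h i)]
      · rw [if_pos hh]
      · intro v _ hv
        refine if_neg fun he => hv ?_
        rw [he]; simp
      · intro habs; exact absurd (mem_univ _) habs
    · rw [if_neg hc]
      refine (Finset.sum_eq_zero fun v _ => if_neg fun he => hc fun i' hi' => ?_).symm
      rw [he, Function.update_of_ne (Finset.mem_erase.mp hi').1]
  simp only [step]
  rw [Finset.sum_comm]
  refine Finset.sum_congr rfl fun v _ => ?_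
  rw [Finset.sum_eq_single (Function.update g i v)]
  · rw [if_pos rfl]
  · intro h _ hv; exact if_neg hv
  · intro habs; exact absurd (mem_univ _) habs

lemma key_marginal {dA dB m : ℕ} {OB : Type} [Fintype OB] [DecidableEq OB]
    (F : Fin m → OB → Matrix (Fin dB) (Fin dB) ℂ) (hF : ∀ i', ∑ b, F i' b = 1)
    (ρ' : Matrix (Fin dA × (Fin m → Fin dB)) (Fin dA × (Fin m → Fin dB)) ℂ)
    (A : Matrix (Fin dA) (Fin dA) ℂ) (i : Fin m) (b : OB) :
    ∑ bv : Fin m → OB, (if bv i = b then (ρ' * (A ⊗ₖ GM F bv)).trace else 0)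
      = ((reducedAt ρ' i) * (A ⊗ₖ F i b)).trace := by
  have lhs_eq : ∑ bv : Fin m → OB, (if bv i = b then (ρ' * (A ⊗ₖ GM F bv)).trace else 0)
      = ∑ α : Fin dA, ∑ β : Fin dA, ∑ v : Fin dB, ∑ g : Fin m → Fin dB,
          ρ' (α, g) (β, Function.update g i v) * (A β α * F i b v (g i)) := by
    calc ∑ bv : Fin m → OB, (if bv i = b then (ρ' * (A ⊗ₖ GM F bv)).trace else 0)
        = ∑ bv : Fin m → OB, ∑ x, ∑ y, (if bv i = b then
            ρ' x y * (A y.1 x.1 * ∏ i', F i' (bv i') (y.2 i') (x.2 i')) else 0) := by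
          refine Finset.sum_congr rfl fun bv _ => ?_
          split
          · rw [trace_mul_apply']; rfl
          · simp
      _ = ∑ x, ∑ y, ρ' x y * (A y.1 x.1 * ∑ bv : Fin m → OB,
            (if bv i = b then ∏ i', F i' (bv i') (y.2 i') (x.2 i') else 0)) := by
          rw [Finset.sum_comm]
          refine Finset.sum_congr rfl fun x _ => ?_
          rw [Finset.sum_comm]
          refine Finset.sum_congr rfl fun y _ => ?_
          rw [Finset.mul_sum, Finset.mul_sum]
          refine Finset.sum_congr rfl fun bv _ => ?_
          split <;> simp
      _ = ∑ x : Fin dA × (Fin m → Fin dB), ∑ y : Fin dA × (Fin m → Fin dB),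
            ρ' x y * (A y.1 x.1 * (F i b (y.2 i) (x.2 i) *
              ∏ i' ∈ univ.erase i, (if y.2 i' = x.2 i' then (1:ℂ) else 0))) := by
          refine Finset.sum_congr rfl fun x _ => Finset.sum_congr rfl fun y _ => ?_
          rw [sum_ind_prod F hF i b x.2 y.2]
      _ = ∑ α : Fin dA, ∑ g : Fin m → Fin dB, ∑ β : Fin dA, ∑ h : Fin m → Fin dB,
            (if ∀ i' ∈ univ.erase i, h i' = g i' then
              ρ' (α, g) (β, h) * (A β α * F i b (h i) (g i)) else 0) := by
          rw [Fintype.sum_prod_type]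
          refine Finset.sum_congr rfl fun α _ => Finset.sum_congr rfl fun g _ => ?_
          rw [Fintype.sum_prod_type]
          refine Finset.sum_congr rfl fun β _ => Finset.sum_congr rfl fun h _ => ?_
          rw [Finset.prod_boole]
          split <;> simp
      _ = ∑ α : Fin dA, ∑ g : Fin m → Fin dB, ∑ β : Fin dA, ∑ v : Fin dB,
            ρ' (α, g) (β, Function.update g i v) * (A β α * F i b v (g i)) := by
          refine Finset.sum_congr rfl fun α _ => Finset.sum_congr rfl fun g _ =>
            Finset.sum_congr rfl fun β _ => ?_
          rw [sum_over_agree i g (fun h => ρ' (α, g) (β, h) * (A β α * F i b (h i) (g i)))]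
          simp [Function.update_self]
      _ = ∑ α : Fin dA, ∑ β : Fin dA, ∑ v : Fin dB, ∑ g : Fin m → Fin dB,
          ρ' (α, g) (β, Function.update g i v) * (A β α * F i b v (g i)) := by
          refine Finset.sum_congr rfl fun α _ => ?_
          rw [Finset.sum_comm]
          refine Finset.sum_congr rfl fun β _ => ?_
          rw [Finset.sum_comm]
  rw [lhs_eq, trace_mul_apply']
  simp only [Fintype.sum_prod_type]
  refine Finset.sum_congr rfl fun α _ => ?_
  conv_rhs => rw [Finset.sum_comm]
  refine Finset.sum_congr rfl fun β _ => ?_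
  conv_rhs => rw [Finset.sum_comm]
  refine Finset.sum_congr rfl fun v _ => ?_
  calc ∑ g : Fin m → Fin dB, ρ' (α, g) (β, Function.update g i v) * (A β α * F i b v (g i))
      = ∑ u : Fin dB, ∑ g : Fin m → Fin dB, (if g i = u then
          ρ' (α, g) (β, Function.update g i v) * (A β α * F i b v u) else 0) := by
        rw [Finset.sum_comm]
        refine Finset.sum_congr rfl fun g _ => ?_
        rw [Finset.sum_ite_eq univ (g i)
          (fun u => ρ' (α, g) (β, Function.update g i v) * (A β α * F i b v u))]
        simp
    _ = ∑ u : Fin dB, reducedAt ρ' i (α, u) (β, v) * ((A ⊗ₖ F i b) (β, v) (α, u)) := by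
        refine Finset.sum_congr rfl fun u _ => ?_
        show _ = (∑ g : Fin m → Fin dB, if g i = u then
            ρ' (α, g) (β, Function.update g i v) else 0) * (A β α * F i b v u)
        rw [Finset.sum_mul]
        refine Finset.sum_congr rfl fun g _ => ?_
        rw [ite_mul, zero_mul]
lemma kron_sum' {α : Type*} (s : Finset α) (A : Matrix n n ℂ) (f : α → Matrix p p ℂ) :
    A ⊗ₖ (∑ a ∈ s, f a) = ∑ a ∈ s, (A ⊗ₖ f a) := by
  ext ⟨i,j⟩ ⟨k,l⟩
  simp [Matrix.sum_apply, Finset.mul_sum]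

lemma psd_one : (1 : Matrix n n ℂ).PosSemidef :=
  posSemidef_iff_eq_ct_mul_self'.mpr ⟨1, by simp⟩

end AuxHelpers

/-- **Contrapositive of Theorem 1.** If the joint statistics of some finite family of POVMs on
Alice's side and `m` POVMs on Bob's side measured on `ρ` admit no local hidden variable model
(i.e. `ρ` violates a Bell inequality with `m` settings on Bob's side), then `ρ` has no symmetric
extension to `m` copies of `B`. -/
theorem no_symmetric_extension_of_no_lhv
    {dA dB m : ℕ} {J OA OB : Type} [Fintype J] [Fintype OA] [Fintype OB]
    (ρ : Matrix (Fin dA × Fin dB) (Fin dA × Fin dB) ℂ) (hρ : IsDensityMatrix ρ)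
    (E : J → OA → Matrix (Fin dA) (Fin dA) ℂ) (hE : ∀ j, IsPOVM (E j))
    (F : Fin m → OB → Matrix (Fin dB) (Fin dB) ℂ) (hF : ∀ i, IsPOVM (F i))
    (hNoLHV : ¬ ∃ (N : ℕ) (p : Fin N → ℝ) (PA : J → OA → Fin N → ℝ)
        (PB : Fin m → OB → Fin N → ℝ),
      (∀ l, 0 ≤ p l) ∧ (∑ l, p l = 1) ∧
      (∀ j a l, 0 ≤ PA j a l ∧ PA j a l ≤ 1) ∧
      (∀ j l, ∑ a, PA j a l = 1) ∧
      (∀ i b l, 0 ≤ PB i b l ∧ PB i b l ≤ 1) ∧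
      (∀ i l, ∑ b, PB i b l = 1) ∧
      (∀ (j : J) (i : Fin m) (a : OA) (b : OB),
        (ρ * (E j a ⊗ₖ F i b)).trace = ((∑ l, p l * PA j a l * PB i b l : ℝ) : ℂ))) :
    ¬ ∃ ρ' : Matrix (Fin dA × (Fin m → Fin dB)) (Fin dA × (Fin m → Fin dB)) ℂ,
        IsDensityMatrix ρ' ∧ ∀ i : Fin m, reducedAt ρ' i = ρ := by
  classical
  rintro ⟨ρ', ⟨hP', hT'⟩, hred⟩
  apply hNoLHV
  obtain ⟨hρpsd, hρtr⟩ := hρ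
  -- the index types are nonempty
  have hne : Nonempty (Fin dA × Fin dB) := by
    by_contra h
    rw [not_nonempty_iff] at h
    have h0 : ρ.trace = 0 := by simp [Matrix.trace]
    rw [hρtr] at h0
    exact one_ne_zero h0
  have hOA : J → Nonempty OA := by
    intro j
    by_contra h
    rw [not_nonempty_iff] at h
    have h2 := (hE j).2
    rw [Finset.univ_eq_empty, Finset.sum_empty] at h2
    obtain ⟨⟨α0, _⟩⟩ := hne
    have h3 : (0 : Matrix (Fin dA) (Fin dA) ℂ) α0 α0 = (1 : Matrix (Fin dA) (Fin dA) ℂ) α0 α0 := by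
      rw [h2]
    simp [Matrix.one_apply] at h3
  -- basic objects
  set Λ := (Fin m → OB) with hΛ
  let e : Fin (Fintype.card Λ) ≃ Λ := (Fintype.equivFin Λ).symm
  let T : J → OA → Λ → ℂ := fun j a bv => (ρ' * (E j a ⊗ₖ GM F bv)).trace
  let S : Λ → ℂ := fun bv => (ρ' * ((1 : Matrix (Fin dA) (Fin dA) ℂ) ⊗ₖ GM F bv)).trace
  have hGMpsd : ∀ bv : Λ, (GM F bv).PosSemidef :=
    fun bv => GM_posSemidef bv (fun i => (hF i).1 (bv i))
  have hTnn : ∀ j a bv, 0 ≤ T j a bv := fun j a bv =>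
    psd_trace_mul_nonneg hP' (psd_kron ((hE j).1 a) (hGMpsd bv))
  have hSnn : ∀ bv, 0 ≤ S bv := fun bv =>
    psd_trace_mul_nonneg hP' (psd_kron psd_one (hGMpsd bv))
  have hsum_a : ∀ j bv, ∑ a, T j a bv = S bv := by
    intro j bv
    calc ∑ a, T j a bv = (ρ' * ∑ a, (E j a ⊗ₖ GM F bv)).trace := by
          rw [Finset.mul_sum, Matrix.trace_sum]
      _ = S bv := by rw [← sum_kron, (hE j).2]
  have hsum_a_re : ∀ j bv, ∑ a, (T j a bv).re = (S bv).re := by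
    intro j bv
    rw [← Complex.re_sum, hsum_a]
  -- the hidden-variable model
  refine ⟨Fintype.card Λ, fun l => (S (e l)).re,
    fun j a l => if (S (e l)).re = 0 then (Fintype.card OA : ℝ)⁻¹
      else (T j a (e l)).re / (S (e l)).re,
    fun i b l => if (e l) i = b then 1 else 0,
    ?_, ?_, ?_, ?_, ?_, ?_, ?_⟩
  · exact fun l => (Complex.nonneg_iff.mp (hSnn (e l))).1
  · -- total probability one
    have hS1 : ∑ bv : Λ, S bv = 1 := by
      calc ∑ bv : Λ, S bv
          = (ρ' * ((1 : Matrix (Fin dA) (Fin dA) ℂ) ⊗ₖ ∑ bv : Λ, GM F bv)).trace := by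
            rw [kron_sum', Finset.mul_sum, Matrix.trace_sum]
        _ = 1 := by
            rw [sum_GM (fun i => (hF i).2), Matrix.one_kronecker_one, mul_one, hT']
    calc ∑ l, (S (e l)).re = (∑ l, S (e l)).re := (Complex.re_sum _ _).symm
      _ = (∑ bv : Λ, S bv).re := by rw [Equiv.sum_comp e S]
      _ = 1 := by rw [hS1]; rfl
  · -- PA bounds
    intro j a l
    dsimp only
    have hcard : 0 < (Fintype.card OA : ℝ) := by
      have := hOA j
      have : 0 < Fintype.card OA := Fintype.card_pos
      exact_mod_cast this
    by_cases hz : (S (e l)).re = 0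
    · rw [if_pos hz]
      constructor
      · positivity
      · rw [inv_le_one_iff₀]
        right
        exact_mod_cast Nat.one_le_iff_ne_zero.mpr (Nat.pos_iff_ne_zero.mp (by exact_mod_cast hcard))
    · rw [if_neg hz]
      have hSpos : 0 < (S (e l)).re :=
        lt_of_le_of_ne (Complex.nonneg_iff.mp (hSnn (e l))).1 (Ne.symm hz)
      have hTle : (T j a (e l)).re ≤ (S (e l)).re := by
        rw [← hsum_a_re j (e l)]
        exact Finset.single_le_sum
          (fun a' _ => (Complex.nonneg_iff.mp (hTnn j a' (e l))).1) (Finset.mem_univ a)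
      constructor
      · exact div_nonneg (Complex.nonneg_iff.mp (hTnn j a (e l))).1 hSpos.le
      · exact div_le_one_of_le₀ hTle hSpos.le
  · -- PA sums to one
    intro j l
    dsimp only
    by_cases hz : (S (e l)).re = 0
    · simp only [if_pos hz]
      rw [Finset.sum_const, nsmul_eq_mul, Finset.card_univ, mul_inv_cancel₀]
      have := hOA j
      have : 0 < Fintype.card OA := Fintype.card_pos
      exact_mod_cast Nat.pos_iff_ne_zero.mp this
    · simp only [if_neg hz]
      rw [← Finset.sum_div, hsum_a_re j (e l), div_self hz]
  · -- PB bounds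
    intro i b l
    dsimp only
    split <;> norm_num
  · -- PB sums to one
    intro i l
    dsimp only
    simp [Finset.sum_ite_eq]
  · -- the statistics
    intro j i a b
    dsimp only
    have hterm : ∀ l, (S (e l)).re *
        (if (S (e l)).re = 0 then (Fintype.card OA : ℝ)⁻¹
          else (T j a (e l)).re / (S (e l)).re) *
        (if (e l) i = b then (1:ℝ) else 0)
        = (if (e l) i = b then (T j a (e l)).re else 0) := by
      intro l
      have hpa : (S (e l)).re *
          (if (S (e l)).re = 0 then (Fintype.card OA : ℝ)⁻¹
            else (T j a (e l)).re / (S (e l)).re) = (T j a (e l)).re := by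
        by_cases hz : (S (e l)).re = 0
        · rw [if_pos hz, hz, zero_mul]
          have hall : ∑ a', (T j a' (e l)).re = 0 := by rw [hsum_a_re j (e l), hz]
          have := (Finset.sum_eq_zero_iff_of_nonneg
            (fun a' _ => (Complex.nonneg_iff.mp (hTnn j a' (e l))).1)).mp hall a
            (Finset.mem_univ a)
          exact this.symm
        · rw [if_neg hz, mul_div_cancel₀ _ hz]
      rw [hpa]
      split <;> simp
    have hTreal : ∀ bv, ((T j a bv).re : ℂ) = T j a bv := by
      intro bv
      obtain ⟨h1, h2⟩ := Complex.nonneg_iff.mp (hTnn j a bv)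
      exact Complex.ext (by simp) (by simp [← h2])
    calc (ρ * (E j a ⊗ₖ F i b)).trace
        = ((reducedAt ρ' i) * (E j a ⊗ₖ F i b)).trace := by rw [hred i]
      _ = ∑ bv : Λ, (if bv i = b then T j a bv else 0) :=
          (key_marginal F (fun i' => (hF i').2) ρ' (E j a) i b).symm
      _ = ∑ l, (if (e l) i = b then T j a (e l) else 0) :=
          (Equiv.sum_comp e (fun bv => if bv i = b then T j a bv else 0)).symm
      _ = ((∑ l, (if (e l) i = b then (T j a (e l)).re else 0) : ℝ) : ℂ) := by
          push_cast
          refine Finset.sum_congr rfl fun l _ => ?_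
          split
          · exact (hTreal (e l)).symm
          · rfl
      _ = ((∑ l, (S (e l)).re *
            (if (S (e l)).re = 0 then (Fintype.card OA : ℝ)⁻¹
              else (T j a (e l)).re / (S (e l)).re) *
            (if (e l) i = b then (1:ℝ) else 0) : ℝ) : ℂ) := by
          exact congrArg Complex.ofReal
            (Finset.sum_congr rfl fun l _ => (hterm l).symm)
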